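/- Let X be a finite measure space, A a linear operator generating a C₀-semigroup (e^{-tA})_{t≥0} of positive operators on L²(X), with e^{-tA}1 ∈ L^∞(X) for all t > 0. Then every eigenvalue λ of A with an eigenvector in L^∞(X) satisfies Re λ ≥ -inf_{t>0} (log ‖e^{-tA}1‖_∞)/t. -/
import Mathlib


open MeasureTheory
open scoped ENNReal

/-- eigenvalue lower bound via the parabolic landscape functions
`e^{-tA} 1`:  `Re λ ≥ -inf_{t>0} log ‖e^{-tA} 1‖_∞ / t`. -/
theorem eigenvalue_lower_bound_parabolic
    {X : Type*} [MeasurableSpace X] (ν : Measure X) [IsFiniteMeasure ν]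
    -- the `C₀`-semigroup `T t = e^{-tA}` generated by `-A`
    (T : ℝ → (Lp ℝ 2 ν →L[ℝ] Lp ℝ 2 ν))
    (hT0 : T 0 = ContinuousLinearMap.id ℝ (Lp ℝ 2 ν))
    (hTsem : ∀ s t : ℝ, 0 ≤ s → 0 ≤ t → T (s + t) = (T s).comp (T t))
    (hTcont : ∀ f : Lp ℝ 2 ν, ContinuousOn (fun t => T t f) (Set.Ici 0))
    -- positivity of the semigroup
    (hTpos : ∀ t : ℝ, 0 ≤ t → ∀ f : Lp ℝ 2 ν,
      (0 : X → ℝ) ≤ᵐ[ν] f → (0 : X → ℝ) ≤ᵐ[ν] T t f)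
    (one : Lp ℝ 2 ν) (hone : (one : X → ℝ) =ᵐ[ν] fun _ => (1 : ℝ))
    -- `e^{-tA} 1 ∈ L^∞` for all `t > 0`
    (hT1_inf : ∀ t : ℝ, 0 < t → eLpNorm (T t one : X → ℝ) ⊤ ν ≠ ∞)
    -- eigenpair `(λ, φ)` of `A` with `φ ∈ L^∞`, via `e^{-tA} φ = e^{-tλ} φ`
    (lam : ℝ) (φ : Lp ℝ 2 ν) (hφ : φ ≠ 0)
    (heig : ∀ t : ℝ, 0 ≤ t → T t φ = Real.exp (-(t * lam)) • φ)
    (hphi_inf : eLpNorm (φ : X → ℝ) ⊤ ν ≠ ∞) :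
    -(⨅ t : {t : ℝ // 0 < t},
        Real.log ((eLpNorm (T t one : X → ℝ) ⊤ ν).toReal) / (t : ℝ)) ≤ lam := by
  classical
  set C : ℝ≥0∞ := eLpNorm (φ : X → ℝ) ⊤ ν with hCdef
  set c : ℝ := C.toReal with hcdef
  have hCne : C ≠ 0 := by
    intro h
    apply hφ
    have h0 : (φ : X → ℝ) =ᵐ[ν] 0 :=
      (eLpNorm_eq_zero_iff (Lp.aestronglyMeasurable φ) (by simp)).mp h
    ext1
    exact h0.trans (Lp.coeFn_zero ℝ 2 ν).symm
  have hc_pos : 0 < c := ENNReal.toReal_pos hCne hphi_inf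
  have hφ_bd : ∀ᵐ x ∂ν, |(φ : X → ℝ) x| ≤ c := by
    have h := ae_le_eLpNormEssSup (f := (φ : X → ℝ)) (μ := ν)
    filter_upwards [h] with x hx
    have hx' : (‖(φ : X → ℝ) x‖₊ : ℝ≥0∞) ≤ C := by
      rwa [hCdef, eLpNorm_exponent_top]
    have := ENNReal.toReal_mono hphi_inf hx'
    simpa [Real.norm_eq_abs] using this
  have hone_pos : (0 : X → ℝ) ≤ᵐ[ν] one := by
    filter_upwards [hone] with x hx
    simp [hx]
  have key : ∀ t : ℝ, 0 < t →
      Real.exp (-(t * lam)) ≤ (eLpNorm (T t one : X → ℝ) ⊤ ν).toReal := by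
    intro t ht
    set M : ℝ≥0∞ := eLpNorm (T t one : X → ℝ) ⊤ ν with hMdef
    have hMne : M ≠ ∞ := hT1_inf t ht
    set e : ℝ := Real.exp (-(t * lam)) with hedef
    have he_pos : 0 < e := Real.exp_pos _
    -- a.e. pointwise bound  e * |φ| ≤ c * (T t 1)
    have haux : ∀ s : ℝ, s = 1 ∨ s = -1 →
        (0 : X → ℝ) ≤ᵐ[ν] fun x => c * (T t one : X → ℝ) x + s * (e * (φ : X → ℝ) x) := by
      intro s hs
      have hg0 : (0 : X → ℝ) ≤ᵐ[ν] (c • one + s • φ : Lp ℝ 2 ν) := by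
        filter_upwards [Lp.coeFn_add (c • one) (s • φ), Lp.coeFn_smul c one,
          Lp.coeFn_smul s φ, hone, hφ_bd] with x h1 h2 h3 h4 h5
        rw [h1]
        simp only [Pi.add_apply]
        rw [h2, h3]
        simp only [Pi.smul_apply, smul_eq_mul, h4]
        have hab := abs_le.mp h5
        rcases hs with h | h <;> rw [h] <;> simp only [Pi.zero_apply] <;>
          nlinarith [hab.1, hab.2]
      have hTg := hTpos t ht.le _ hg0
      have hTg_eq : T t (c • one + s • φ) = c • T t one + s • Real.exp (-(t * lam)) • φ := by
        rw [map_add, (T t).map_smul, (T t).map_smul, heig t ht.le]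
      rw [hTg_eq] at hTg
      filter_upwards [hTg, Lp.coeFn_add (c • T t one) (s • Real.exp (-(t * lam)) • φ),
        Lp.coeFn_smul c (T t one), Lp.coeFn_smul s (Real.exp (-(t * lam)) • φ),
        Lp.coeFn_smul (Real.exp (-(t * lam))) φ] with x h0 h1 h2 h3 h4
      rw [h1] at h0
      simp only [Pi.add_apply] at h0
      rw [h2, h3] at h0
      simp only [Pi.smul_apply, smul_eq_mul] at h0 h4
      rw [h4] at h0
      simpa [hedef, mul_assoc] using h0
    have hbd : ∀ᵐ x ∂ν, e * |(φ : X → ℝ) x| ≤ c * (T t one : X → ℝ) x := by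
      filter_upwards [haux 1 (Or.inl rfl), haux (-1) (Or.inr rfl)] with x h1 h2
      simp only [Pi.zero_apply, one_mul, neg_one_mul] at h1 h2
      rcases abs_cases ((φ : X → ℝ) x) with ⟨h, _⟩ | ⟨h, _⟩ <;> rw [h] <;> nlinarith
    have hTone_pos := hTpos t ht.le one hone_pos
    -- compare eLpNorms
    have hmono : eLpNorm (fun x => e * (φ : X → ℝ) x) ⊤ ν ≤
        eLpNorm (fun x => c * (T t one : X → ℝ) x) ⊤ ν := by
      apply eLpNorm_mono_ae
      filter_upwards [hbd, hTone_pos] with x h1 h2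
      have h2' : (0 : ℝ) ≤ (T t one : X → ℝ) x := h2
      rw [Real.norm_eq_abs, Real.norm_eq_abs, abs_mul, abs_mul,
        abs_of_nonneg he_pos.le, abs_of_nonneg hc_pos.le, abs_of_nonneg h2']
      exact h1
    have hL : eLpNorm (fun x => e * (φ : X → ℝ) x) ⊤ ν = (‖e‖₊ : ℝ≥0∞) * C := by
      rw [hCdef]
      exact eLpNorm_const_smul e ((φ : X → ℝ)) ⊤ ν
    have hR : eLpNorm (fun x => c * (T t one : X → ℝ) x) ⊤ ν = (‖c‖₊ : ℝ≥0∞) * M := by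
      rw [hMdef]
      exact eLpNorm_const_smul c ((T t one : X → ℝ)) ⊤ ν
    rw [hL, hR] at hmono
    have hRne : (‖c‖₊ : ℝ≥0∞) * M ≠ ∞ := ENNReal.mul_ne_top ENNReal.coe_ne_top hMne
    have := ENNReal.toReal_mono hRne hmono
    rw [ENNReal.toReal_mul, ENNReal.toReal_mul] at this
    simp only [ENNReal.coe_toReal, coe_nnnorm, Real.norm_eq_abs, abs_of_nonneg he_pos.le,
      abs_of_nonneg hc_pos.le] at this
    -- e * c ≤ c * M.toReal
    have : e * c ≤ M.toReal * c := by rw [mul_comm M.toReal c]; exact this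
    exact le_of_mul_le_mul_right this hc_pos
  rw [neg_le]
  apply le_ciInf
  rintro ⟨t, ht⟩
  have hk := key t ht
  have hMpos : 0 < (eLpNorm (T t one : X → ℝ) ⊤ ν).toReal :=
    lt_of_lt_of_le (Real.exp_pos _) hk
  rw [le_div_iff₀ ht]
  have hlog : -(t * lam) ≤ Real.log ((eLpNorm (T t one : X → ℝ) ⊤ ν).toReal) :=
    (Real.le_log_iff_exp_le hMpos).mpr hk
  linarith
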